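/- Let p be a prime, n a positive integer, and q an integer coprime to p. For every natural number x, the set O^n(x) = { w ∈ ZMod (p^n) : ∃ y ∈ ℕ, y ≡ x (mod p^n) and w ≡ q^y (mod p^n) } equals { q^{x + b p^n} mod p^n : b ∈ {0, 1, ..., p-2} }. -/

import Mathlib

/-- The set of out-neighbors of `x` in the exponentiation graph modulo `p^n`:
residues modulo `p^n` of `q^y` over all natural numbers `y ≡ x (mod p^n)`. -/
def outNbrs (p n : ℕ) (q : ℤ) (x : ℕ) : Set (ZMod (p ^ n)) :=
  {w | ∃ y : ℕ, (y : ZMod (p ^ n)) = (x : ZMod (p ^ n)) ∧ (q : ZMod (p ^ n)) ^ y = w}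

theorem outNbrs_eq_image (p n : ℕ) (q : ℤ) (hp : p.Prime) (hn : 0 < n)
    (hq : IsCoprime q (p : ℤ)) (x : ℕ) :
    outNbrs p n q x =
      {w | ∃ b : ℕ, b ≤ p - 2 ∧ w = (q : ZMod (p ^ n)) ^ (x + b * p ^ n)} := by
  have hp1 : 1 < p := hp.one_lt
  have hpn : p ^ n ≠ 0 := pow_ne_zero n hp.pos.ne'
  haveI : NeZero (p ^ n) := ⟨hpn⟩
  -- q is a unit mod p^n
  have hu : IsUnit ((q : ℤ) : ZMod (p ^ n)) := by
    have h1 : IsCoprime q ((p : ℤ) ^ n) := hq.pow_right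
    have h2 : IsCoprime ((q : ℤ) : ZMod (p ^ n)) ((((p : ℤ) ^ n) : ℤ) : ZMod (p ^ n)) :=
      h1.map (Int.castRingHom (ZMod (p ^ n)))
    have h3 : ((((p : ℤ) ^ n) : ℤ) : ZMod (p ^ n)) = 0 := by
      push_cast
      exact_mod_cast ZMod.natCast_self (p ^ n)
    rw [h3] at h2
    exact isCoprime_zero_right.mp h2
  -- Euler: q^(p^n * (p-1)) = 1
  have hone : ((q : ℤ) : ZMod (p ^ n)) ^ (p ^ n * (p - 1)) = 1 := by
    obtain ⟨u, hu'⟩ := hu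
    have ht : u ^ Nat.totient (p ^ n) = 1 := ZMod.pow_totient u
    have hdvd : Nat.totient (p ^ n) ∣ p ^ n * (p - 1) := by
      rw [Nat.totient_prime_pow hp hn]
      exact Nat.mul_dvd_mul (pow_dvd_pow p (by omega)) dvd_rfl
    obtain ⟨k, hk⟩ := hdvd
    have : (u : ZMod (p ^ n)) ^ (p ^ n * (p - 1)) = 1 := by
      rw [hk, pow_mul, ← Units.val_pow_eq_pow_val, ht, Units.val_one, one_pow]
    rwa [hu'] at this
  have hperiod : ∀ a k : ℕ,
      ((q : ℤ) : ZMod (p ^ n)) ^ (a + k * (p ^ n * (p - 1))) = ((q : ℤ) : ZMod (p ^ n)) ^ a := by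
    intro a k
    rw [pow_add, pow_mul', hone, one_pow, mul_one]
  ext w
  simp only [outNbrs, Set.mem_setOf_eq]
  constructor
  · rintro ⟨y, hy, rfl⟩
    have hxy : y ≡ x [MOD p ^ n] := (ZMod.natCast_eq_natCast_iff _ _ _).mp hy
    set M := p ^ n * (p - 1) with hM
    have hMpos : 0 < M := Nat.mul_pos (pow_pos hp.pos n) (by omega)
    set Y := y + (x + 1) * M with hYdef
    have hYx' : Y ≡ x [MOD p ^ n] := by
      have h1 : Y ≡ y + 0 [MOD p ^ n] := by
        refine Nat.ModEq.add_left y ?_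
        exact (Nat.modEq_zero_iff_dvd).mpr ⟨(x + 1) * (p - 1), by rw [hM]; ring⟩
      simpa using h1.trans (Nat.ModEq.add_right 0 hxy)
    have hxle : x ≤ Y := by
      have : x + 1 ≤ (x + 1) * M := Nat.le_mul_of_pos_right _ hMpos
      omega
    obtain ⟨t, ht⟩ : p ^ n ∣ Y - x := (Nat.modEq_iff_dvd' hxle).mp hYx'.symm
    have hYx : Y = x + p ^ n * t := by omega
    obtain ⟨b, d, hb, hd⟩ : ∃ b d, b ≤ p - 2 ∧ t = b + (p - 1) * d :=
      ⟨t % (p - 1), t / (p - 1),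
        by have := Nat.mod_lt t (show 0 < p - 1 by omega); omega,
        (Nat.mod_add_div _ _).symm⟩
    refine ⟨b, hb, ?_⟩
    have hYeq : Y = (x + b * p ^ n) + d * (p ^ n * (p - 1)) := by
      rw [hYx, hd]; ring
    calc ((q : ℤ) : ZMod (p ^ n)) ^ y
        = ((q : ℤ) : ZMod (p ^ n)) ^ Y := (hperiod y (x + 1)).symm
      _ = ((q : ℤ) : ZMod (p ^ n)) ^ (x + b * p ^ n) := by
          rw [hYeq]; exact hperiod _ d
  · rintro ⟨b, hb, rfl⟩
    refine ⟨x + b * p ^ n, ?_, rfl⟩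
    have h0 : ((p : ZMod (p ^ n))) ^ n = 0 := by
      have := ZMod.natCast_self (p ^ n)
      push_cast at this
      exact this
    push_cast
    simp [h0]
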